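/- (Algebraic Birkhoff factorisation, Connes–Kreimer) Let H be a connected graded Hopf algebra over ℂ, A a commutative unital algebra with a linear Rota–Baxter projection Q of weight −1 splitting A = Q(A) ⊕ (id−Q)(A). For every character φ ∈ char(H,A), the maps defined by the Bogoliubov recursions φ₋ = 1* − Q((φ − 1*) ⋆ φ₋) and φ₊ = 1* + (id−Q)((φ − 1*) ⋆ φ₋) are well-defined algebra morphisms with values in Q(A) resp. (id−Q)(A) (on the augmentation ideal), and they satisfy the factorisation φ = φ₊ ⋆ φ₋^{−1}. -/

import Mathlib

open scoped TensorProduct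

variable (H : Type) [Ring H] [HopfAlgebra ℂ H]
variable (A : Type) [CommRing A] [Algebra ℂ A]

/-- The convolution product `ψ ⋆ φ = m_A ∘ (ψ ⊗ φ) ∘ Δ`. -/
noncomputable def conv (f g : H →ₗ[ℂ] A) : H →ₗ[ℂ] A :=
  (LinearMap.mul' ℂ A) ∘ₗ (TensorProduct.map f g) ∘ₗ Coalgebra.comul (R := ℂ)

/-- The convolution unit `1* = η_A ∘ ε`. -/
noncomputable def counitA : H →ₗ[ℂ] A :=
  (Algebra.linearMap ℂ A) ∘ₗ Coalgebra.counit (R := ℂ)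


variable {H A}

lemma conv_apply (f g : H →ₗ[ℂ] A) (x : H) :
    conv H A f g x = LinearMap.mul' ℂ A (TensorProduct.map f g (Coalgebra.comul (R := ℂ) x)) :=
  rfl

lemma counitA_apply (x : H) :
    counitA H A x = algebraMap ℂ A (Coalgebra.counit (R := ℂ) x) := rfl

lemma counitA_one : counitA H A 1 = 1 := by
  simp [counitA_apply]

lemma conv_counitA_left (g : H →ₗ[ℂ] A) : conv H A (counitA H A) g = g := by
  apply LinearMap.ext; intro x
  have h1 : (Coalgebra.counit (R := ℂ) (A := H)).rTensor H (Coalgebra.comul (R := ℂ) x)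
      = (1 : ℂ) ⊗ₜ[ℂ] x :=
    congr($(Coalgebra.rTensor_counit_comp_comul (R := ℂ) (A := H)) x)
  have h2 : ∀ t : H ⊗[ℂ] H,
      LinearMap.mul' ℂ A (TensorProduct.map (counitA H A) g t)
        = LinearMap.mul' ℂ A (TensorProduct.map (Algebra.linearMap ℂ A) g
            ((Coalgebra.counit (R := ℂ) (A := H)).rTensor H t)) := by
    intro t
    induction t using TensorProduct.induction_on with
    | zero => simp
    | tmul u v => simp [counitA_apply]
    | add a b ha hb => simp [ha, hb]
  rw [conv_apply, h2, h1]; simp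

lemma conv_counitA_right (g : H →ₗ[ℂ] A) : conv H A g (counitA H A) = g := by
  apply LinearMap.ext; intro x
  have h1 : (Coalgebra.counit (R := ℂ) (A := H)).lTensor H (Coalgebra.comul (R := ℂ) x)
      = x ⊗ₜ[ℂ] (1 : ℂ) :=
    congr($(Coalgebra.lTensor_counit_comp_comul (R := ℂ) (A := H)) x)
  have h2 : ∀ t : H ⊗[ℂ] H,
      LinearMap.mul' ℂ A (TensorProduct.map g (counitA H A) t)
        = LinearMap.mul' ℂ A (TensorProduct.map g (Algebra.linearMap ℂ A)
            ((Coalgebra.counit (R := ℂ) (A := H)).lTensor H t)) := by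
    intro t
    induction t using TensorProduct.induction_on with
    | zero => simp
    | tmul u v => simp [counitA_apply]
    | add a b ha hb => simp [ha, hb]
  rw [conv_apply, h2, h1]; simp

lemma conv_sub_left (f f' g : H →ₗ[ℂ] A) :
    conv H A (f - f') g = conv H A f g - conv H A f' g := by
  have : TensorProduct.map (f - f') g = TensorProduct.map f g - TensorProduct.map f' g :=
    TensorProduct.ext' (by intro x y; simp [TensorProduct.sub_tmul])
  unfold conv; rw [this]
  ext x; simp

lemma conv_sub_right (f g g' : H →ₗ[ℂ] A) :
    conv H A f (g - g') = conv H A f g - conv H A f g' := by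
  have : TensorProduct.map f (g - g') = TensorProduct.map f g - TensorProduct.map f g' :=
    TensorProduct.ext' (by intro x y; simp [TensorProduct.tmul_sub])
  unfold conv; rw [this]
  ext x; simp


-- NEW PART

/-- The degree-`n` part of `H ⊗ H`. -/
noncomputable def gradedTwo (ℬ : ℕ → Submodule ℂ H) (n : ℕ) : Submodule ℂ (H ⊗[ℂ] H) :=
  ⨆ (p : ℕ × ℕ) (_ : p.1 + p.2 = n),
    LinearMap.range (TensorProduct.map (ℬ p.1).subtype (ℬ p.2).subtype)

lemma mem_zero_iff (ℬ : ℕ → Submodule ℂ H) (hconn : ℬ 0 = 1) {u : H} (hu : u ∈ ℬ 0) :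
    ∃ c : ℂ, u = algebraMap ℂ H c := by
  rw [hconn] at hu
  obtain ⟨c, hc⟩ := Submodule.mem_one.mp hu
  exact ⟨c, hc.symm⟩

lemma phibar_zero (ℬ : ℕ → Submodule ℂ H) (hconn : ℬ 0 = 1) (φ : H →ₐ[ℂ] A) {u : H}
    (hu : u ∈ ℬ 0) : (φ.toLinearMap - counitA H A) u = 0 := by
  obtain ⟨c, rfl⟩ := mem_zero_iff ℬ hconn hu
  simp [counitA_apply]

/-- Key vanishing lemma: the convolution of a map killing degree 0 with a map
killing all degrees `< n` kills `ℬ n`. -/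
lemma conv_vanish (ℬ : ℕ → Submodule ℂ H)
    (hgr : ∀ n, ∀ x ∈ ℬ n, Coalgebra.comul (R := ℂ) x ∈ gradedTwo ℬ n)
    (f ψ : H →ₗ[ℂ] A) (hf : ∀ u ∈ ℬ 0, f u = 0)
    (n : ℕ) {x : H} (hx : x ∈ ℬ n) (hψ : ∀ j, j < n → ∀ z ∈ ℬ j, ψ z = 0) :
    conv H A f ψ x = 0 := by
  rw [conv_apply]
  have main : ∀ t ∈ gradedTwo ℬ n, LinearMap.mul' ℂ A (TensorProduct.map f ψ t) = 0 := by
    intro t ht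
    refine Submodule.iSup_induction (motive := fun t => LinearMap.mul' ℂ A (TensorProduct.map f ψ t) = 0)
      _ ht ?_ (by simp) (fun a b ha hb => by simp [ha, hb])
    intro pq t' ht'
    by_cases hpq : pq.1 + pq.2 = n
    · rw [iSup_pos hpq] at ht'
      obtain ⟨s, rfl⟩ := ht'
      induction s using TensorProduct.induction_on with
      | zero => simp
      | tmul u v =>
        simp only [TensorProduct.map_tmul, Submodule.coe_subtype, LinearMap.mul'_apply]
        rcases Nat.eq_zero_or_pos pq.1 with h0 | hpos
        · rw [hf u.1 (by simpa [h0] using u.2), zero_mul]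
        · rw [hψ pq.2 (by omega) v.1 v.2, mul_zero]
      | add a b ha hb => simp only [map_add] at *; simp [ha, hb]
    · rw [iSup_neg hpq] at ht'
      simp only [Submodule.mem_bot] at ht'
      simp [ht']
  exact main _ (hgr n x hx)
/-- Projection of `H` onto the degree-0 component, as an endomorphism. -/
noncomputable def proj0 (ℬ : ℕ → Submodule ℂ H) [GradedAlgebra ℬ] : H →ₗ[ℂ] H :=
  (ℬ 0).subtype ∘ₗ (DirectSum.component ℂ ℕ (fun i => ℬ i) 0) ∘ₗ
    (DirectSum.decomposeLinearEquiv ℬ).toLinearMap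

lemma proj0_apply (ℬ : ℕ → Submodule ℂ H) [GradedAlgebra ℬ] (x : H) :
    proj0 ℬ x = (DirectSum.decompose ℬ x 0 : H) := rfl

lemma proj0_of_mem_same (ℬ : ℕ → Submodule ℂ H) [GradedAlgebra ℬ] {x : H} (hx : x ∈ ℬ 0) :
    proj0 ℬ x = x := by
  rw [proj0_apply, DirectSum.decompose_of_mem_same ℬ hx]

lemma proj0_of_mem_ne (ℬ : ℕ → Submodule ℂ H) [GradedAlgebra ℬ] {x : H} {n : ℕ}
    (hx : x ∈ ℬ n) (hn : n ≠ 0) : proj0 ℬ x = 0 := by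
  rw [proj0_apply, DirectSum.decompose_of_mem_ne ℬ hx hn]

lemma one_ne_zero_H : (1 : H) ≠ 0 := by
  intro h
  have : (Coalgebra.counit (R := ℂ) (1 : H)) = 1 := by simp
  rw [h, map_zero] at this
  exact one_ne_zero this.symm

/-- On a connected graded bialgebra the counit kills every positive degree. -/
lemma counit_vanish (ℬ : ℕ → Submodule ℂ H) [GradedAlgebra ℬ] (hconn : ℬ 0 = 1)
    (hgr : ∀ n, ∀ x ∈ ℬ n, Coalgebra.comul (R := ℂ) x ∈ gradedTwo ℬ n) :
    ∀ n, n ≠ 0 → ∀ x ∈ ℬ n, Coalgebra.counit (R := ℂ) x = (0 : ℂ) := by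
  intro n
  induction n using Nat.strong_induction_on with
  | _ n IH =>
  intro hn x hx
  set ε : H →ₗ[ℂ] ℂ := Coalgebra.counit (R := ℂ) with hε
  set E : H ⊗[ℂ] H →ₗ[ℂ] ℂ :=
    ε ∘ₗ (TensorProduct.rid ℂ H).toLinearMap ∘ₗ (ε.lTensor H) with hE
  set G₁ : H ⊗[ℂ] H →ₗ[ℂ] H :=
    proj0 ℬ ∘ₗ (TensorProduct.rid ℂ H).toLinearMap ∘ₗ (ε.lTensor H) with hG₁
  set G₂ : H ⊗[ℂ] H →ₗ[ℂ] H :=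
    proj0 ℬ ∘ₗ (TensorProduct.lid ℂ H).toLinearMap ∘ₗ (ε.rTensor H) with hG₂
  have hEt : ∀ (u v : H), E (u ⊗ₜ[ℂ] v) = ε v * ε u := by
    intro u v; simp [hE, hε]
  have hG1t : ∀ (u v : H), G₁ (u ⊗ₜ[ℂ] v) = ε v • proj0 ℬ u := by
    intro u v; simp [hG₁, hε]
  have hG2t : ∀ (u v : H), G₂ (u ⊗ₜ[ℂ] v) = ε u • proj0 ℬ v := by
    intro u v; simp [hG₂, hε]
  have key : ∀ t ∈ gradedTwo ℬ n, E t • (1 : H) = G₁ t + G₂ t := by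
    intro t ht
    refine Submodule.iSup_induction (motive := fun t => E t • (1 : H) = G₁ t + G₂ t)
      _ ht ?_ (by simp) ?_
    · intro pq t' ht'
      by_cases hpq : pq.1 + pq.2 = n
      · rw [iSup_pos hpq] at ht'
        obtain ⟨s, rfl⟩ := ht'
        induction s using TensorProduct.induction_on with
        | zero => simp
        | tmul u v =>
          simp only [TensorProduct.map_tmul, Submodule.coe_subtype]
          rw [hEt, hG1t, hG2t]
          rcases Nat.eq_zero_or_pos pq.1 with h0 | hp
          · -- u has degree 0, v degree n
            have hu0 : u.1 ∈ ℬ 0 := by simpa [h0] using u.2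
            have hv : v.1 ∈ ℬ n := by
              have : pq.2 = n := by omega
              simpa [this] using v.2
            obtain ⟨c, hc⟩ := mem_zero_iff ℬ hconn hu0
            rw [proj0_of_mem_ne ℬ hv hn, proj0_of_mem_same ℬ hu0, hc]
            have : ε (algebraMap ℂ H c) = c := by simp [hε]
            rw [this, Algebra.algebraMap_eq_smul_one, smul_smul, smul_zero, add_zero]
          · rcases Nat.eq_zero_or_pos pq.2 with h0' | hq
            · -- v has degree 0, u degree n
              have hv0 : v.1 ∈ ℬ 0 := by simpa [h0'] using v.2
              have hu : u.1 ∈ ℬ n := by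
                have : pq.1 = n := by omega
                simpa [this] using u.2
              obtain ⟨c, hc⟩ := mem_zero_iff ℬ hconn hv0
              rw [proj0_of_mem_ne ℬ hu (by omega), proj0_of_mem_same ℬ hv0, hc]
              have : ε (algebraMap ℂ H c) = c := by simp [hε]
              rw [this, Algebra.algebraMap_eq_smul_one, smul_smul, smul_zero, zero_add,
                mul_comm]
            · -- both positive
              have hεu : ε u.1 = 0 := IH pq.1 (by omega) (by omega) u.1 u.2
              rw [hεu, proj0_of_mem_ne ℬ u.2 (by omega)]
              simp
        | add a b ha hb => simp only [map_add] at *; rw [add_smul, ha, hb]; abel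
      · rw [iSup_neg hpq] at ht'
        simp only [Submodule.mem_bot] at ht'
        simp [ht']
    · intro a b ha hb
      simp only [map_add]; rw [add_smul, ha, hb]; abel
  have hcx : Coalgebra.comul (R := ℂ) x ∈ gradedTwo ℬ n := hgr n x hx
  have h1 : ε.lTensor H (Coalgebra.comul (R := ℂ) x) = x ⊗ₜ[ℂ] (1 : ℂ) :=
    congr($(Coalgebra.lTensor_counit_comp_comul (R := ℂ) (A := H)) x)
  have h2 : ε.rTensor H (Coalgebra.comul (R := ℂ) x) = (1 : ℂ) ⊗ₜ[ℂ] x :=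
    congr($(Coalgebra.rTensor_counit_comp_comul (R := ℂ) (A := H)) x)
  have hEx : E (Coalgebra.comul (R := ℂ) x) = ε x := by
    simp [hE, h1]
  have hg1x : G₁ (Coalgebra.comul (R := ℂ) x) = 0 := by
    simp [hG₁, h1, proj0_of_mem_ne ℬ hx hn]
  have hg2x : G₂ (Coalgebra.comul (R := ℂ) x) = 0 := by
    simp [hG₂, h2, proj0_of_mem_ne ℬ hx hn]
  have := key _ hcx
  rw [hEx, hg1x, hg2x, add_zero] at this
  rcases smul_eq_zero.mp this with h | h
  · exact h
  · exact absurd h one_ne_zero_H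


/-- The approximating sequence for the Bogoliubov recursion. -/
noncomputable def birkS (Q : A →ₗ[ℂ] A) (fb : H →ₗ[ℂ] A) : ℕ → (H →ₗ[ℂ] A)
  | 0 => counitA H A
  | n + 1 => counitA H A - Q ∘ₗ conv H A fb (birkS Q fb n)

/-- The counterterm `φ₋`, glued from the approximating sequence. -/
noncomputable def birkPhim (ℬ : ℕ → Submodule ℂ H) [GradedAlgebra ℬ]
    (Q : A →ₗ[ℂ] A) (fb : H →ₗ[ℂ] A) : H →ₗ[ℂ] A :=
  (DirectSum.toModule ℂ ℕ A fun n => birkS Q fb n ∘ₗ (ℬ n).subtype) ∘ₗ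
    (DirectSum.decomposeLinearEquiv ℬ).toLinearMap

lemma birkPhim_of_mem (ℬ : ℕ → Submodule ℂ H) [GradedAlgebra ℬ]
    (Q : A →ₗ[ℂ] A) (fb : H →ₗ[ℂ] A) {n : ℕ} {x : H} (hx : x ∈ ℬ n) :
    birkPhim ℬ Q fb x = birkS Q fb n x := by
  unfold birkPhim
  rw [LinearMap.comp_apply, LinearEquiv.coe_coe, DirectSum.decomposeLinearEquiv_apply,
    DirectSum.decompose_of_mem ℬ hx, ← DirectSum.lof_eq_of ℂ, DirectSum.toModule_lof]
  rfl

section Graded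

variable (ℬ : ℕ → Submodule ℂ H) [GradedAlgebra ℬ]
    (φ : H →ₐ[ℂ] A) (Q : A →ₗ[ℂ] A)

variable (hconn : ℬ 0 = 1)
    (hgr : ∀ n, ∀ x ∈ ℬ n, Coalgebra.comul (R := ℂ) x ∈ gradedTwo ℬ n)

include hconn hgr

lemma birkS_succ_stab :
    ∀ k n, n ≤ k → ∀ x ∈ ℬ n,
      birkS Q (φ.toLinearMap - counitA H A) (k + 1) x
        = birkS Q (φ.toLinearMap - counitA H A) k x := by
  set fb := φ.toLinearMap - counitA H A with hfb
  have hf : ∀ u ∈ ℬ 0, fb u = 0 := fun u hu => phibar_zero ℬ hconn φ hu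
  intro k
  induction k with
  | zero =>
    intro n hn x hx
    interval_cases n
    show counitA H A x - Q (conv H A fb (birkS Q fb 0) x) = counitA H A x
    rw [conv_vanish ℬ hgr fb _ hf 0 hx (by omega), map_zero, sub_zero]
  | succ k IHk =>
    intro n hn x hx
    show counitA H A x - Q (conv H A fb (birkS Q fb (k + 1)) x)
      = counitA H A x - Q (conv H A fb (birkS Q fb k) x)
    have : conv H A fb (birkS Q fb (k + 1) - birkS Q fb k) x = 0 := by
      refine conv_vanish ℬ hgr fb _ hf n hx ?_
      intro j hj z hz
      rw [LinearMap.sub_apply, IHk j (by omega) z hz, sub_self]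
    rw [conv_sub_right, LinearMap.sub_apply, sub_eq_zero] at this
    rw [this]

lemma birkS_stab :
    ∀ n k, n ≤ k → ∀ x ∈ ℬ n,
      birkS Q (φ.toLinearMap - counitA H A) k x
        = birkS Q (φ.toLinearMap - counitA H A) n x := by
  intro n k
  induction k with
  | zero => intro hn x _; interval_cases n; rfl
  | succ k IHk =>
    intro hn x hx
    by_cases h : n = k + 1
    · subst h; rfl
    · rw [birkS_succ_stab ℬ φ Q hconn hgr k n (by omega) x hx, IHk (by omega) x hx]

lemma birkPhim_fixed :
    birkPhim ℬ Q (φ.toLinearMap - counitA H A)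
      = counitA H A
        - Q ∘ₗ conv H A (φ.toLinearMap - counitA H A)
            (birkPhim ℬ Q (φ.toLinearMap - counitA H A)) := by
  set fb := φ.toLinearMap - counitA H A with hfb
  set φm := birkPhim ℬ Q fb with hφm
  have hf : ∀ u ∈ ℬ 0, fb u = 0 := fun u hu => phibar_zero ℬ hconn φ hu
  apply LinearMap.ext
  refine DirectSum.Decomposition.inductionOn ℬ (by simp) ?_ ?_
  · intro i m
    obtain ⟨x, hx⟩ := m
    show φm x = counitA H A x - Q (conv H A fb φm x)
    have h1 : φm x = birkS Q fb (i + 1) x := by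
      rw [birkPhim_of_mem ℬ Q fb hx, birkS_succ_stab ℬ φ Q hconn hgr i i le_rfl x hx]
    have h2 : conv H A fb (birkS Q fb i - φm) x = 0 := by
      refine conv_vanish ℬ hgr fb _ hf i hx ?_
      intro j hj z hz
      rw [LinearMap.sub_apply, birkPhim_of_mem ℬ Q fb hz,
        birkS_stab ℬ φ Q hconn hgr j i (by omega) z hz, sub_self]
    rw [conv_sub_right, LinearMap.sub_apply, sub_eq_zero] at h2
    rw [h1]
    show counitA H A x - Q (conv H A fb (birkS Q fb i) x) = _
    rw [h2]
  · intro m m' hm hm'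
    simp only [map_add, hm, hm', LinearMap.sub_apply, LinearMap.comp_apply]

lemma birk_unique (ψ ψ' : H →ₗ[ℂ] A)
    (h : ψ = counitA H A - Q ∘ₗ conv H A (φ.toLinearMap - counitA H A) ψ)
    (h' : ψ' = counitA H A - Q ∘ₗ conv H A (φ.toLinearMap - counitA H A) ψ') :
    ψ = ψ' := by
  set fb := φ.toLinearMap - counitA H A with hfb
  have hf : ∀ u ∈ ℬ 0, fb u = 0 := fun u hu => phibar_zero ℬ hconn φ hu
  have key : ∀ n, ∀ x ∈ ℬ n, ψ x = ψ' x := by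
    intro n
    induction n using Nat.strong_induction_on with
    | _ n IH =>
    intro x hx
    have h2 : conv H A fb (ψ - ψ') x = 0 := by
      refine conv_vanish ℬ hgr fb _ hf n hx ?_
      intro j hj z hz
      rw [LinearMap.sub_apply, IH j hj z hz, sub_self]
    rw [conv_sub_right, LinearMap.sub_apply, sub_eq_zero] at h2
    conv_lhs => rw [h]
    conv_rhs => rw [h']
    show counitA H A x - Q (conv H A fb ψ x) = counitA H A x - Q (conv H A fb ψ' x)
    rw [h2]
  apply LinearMap.ext
  refine DirectSum.Decomposition.inductionOn ℬ (by simp) ?_ ?_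
  · intro i m; exact key i m.1 m.2
  · intro m m' hm hm'; simp only [map_add, hm, hm']

lemma birk_phim_one (φm : H →ₗ[ℂ] A)
    (heq : φm = counitA H A - Q ∘ₗ conv H A (φ.toLinearMap - counitA H A) φm) :
    φm 1 = 1 := by
  set fb := φ.toLinearMap - counitA H A with hfb
  have hf : ∀ u ∈ ℬ 0, fb u = 0 := fun u hu => phibar_zero ℬ hconn φ hu
  have h1 : (1 : H) ∈ ℬ 0 := SetLike.one_mem_graded ℬ
  have h0 : conv H A fb φm 1 = 0 := conv_vanish ℬ hgr fb φm hf 0 h1 (by omega)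
  conv_lhs => rw [heq]
  show counitA H A 1 - Q (conv H A fb φm 1) = 1
  rw [h0, map_zero, sub_zero, counitA_apply]
  simp

lemma birk_phim_mul (hQrb : ∀ a b : A, Q a * Q b = Q (Q a * b + a * Q b) - Q (a * b))
    (φm : H →ₗ[ℂ] A)
    (heq : φm = counitA H A - Q ∘ₗ conv H A (φ.toLinearMap - counitA H A) φm) :
    ∀ a b : H, φm (a * b) = φm a * φm b := by
  set fb := φ.toLinearMap - counitA H A with hfb
  have hf0 : ∀ u ∈ ℬ 0, fb u = 0 := fun u hu => phibar_zero ℬ hconn φ hu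
  have hone : φm 1 = 1 := birk_phim_one ℬ φ Q hconn hgr φm heq
  have halg : ∀ c : ℂ, φm (algebraMap ℂ H c) = algebraMap ℂ A c := by
    intro c
    rw [Algebra.algebraMap_eq_smul_one, map_smul, hone, ← Algebra.algebraMap_eq_smul_one]
  have hsplit : ∀ u w : H, fb (u * w)
      = fb u * fb w + fb u * counitA H A w + counitA H A u * fb w := by
    intro u w
    simp only [hfb, LinearMap.sub_apply, AlgHom.toLinearMap_apply, counitA_apply, map_mul,
      Bialgebra.counit_mul]
    ring
  have hQf : ∀ z : H, Coalgebra.counit (R := ℂ) z = 0 →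
      φm z = - Q (conv H A fb φm z) := by
    intro z hz
    conv_lhs => rw [heq]
    show counitA H A z - Q (conv H A fb φm z) = _
    rw [counitA_apply, hz, map_zero, zero_sub]
  have hhom : ∀ n p q, p + q = n → ∀ x ∈ ℬ p, ∀ y ∈ ℬ q,
      φm (x * y) = φm x * φm y := by
    intro n
    induction n using Nat.strong_induction_on with
    | _ n IH =>
    intro p q hpq x hx y hy
    rcases Nat.eq_zero_or_pos p with hp0 | hp
    · obtain ⟨c, rfl⟩ := mem_zero_iff ℬ hconn (hp0 ▸ hx)
      rw [← Algebra.smul_def, map_smul, halg, Algebra.smul_def]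
    rcases Nat.eq_zero_or_pos q with hq0 | hq
    · obtain ⟨c, rfl⟩ := mem_zero_iff ℬ hconn (hq0 ▸ hy)
      have h2 : x * algebraMap ℂ H c = c • x := by
        rw [Algebra.smul_def, Algebra.commutes]
      rw [h2, map_smul, halg, Algebra.smul_def, mul_comm]
    -- main case : both degrees positive
    have hex : Coalgebra.counit (R := ℂ) x = 0 :=
      counit_vanish ℬ hconn hgr p (by omega) x hx
    have hey : Coalgebra.counit (R := ℂ) y = 0 :=
      counit_vanish ℬ hconn hgr q (by omega) y hy
    have hexy : Coalgebra.counit (R := ℂ) (x * y) = 0 := by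
      rw [Bialgebra.counit_mul, hex, zero_mul]
    set F : H ⊗[ℂ] H →ₗ[ℂ] A := LinearMap.mul' ℂ A ∘ₗ TensorProduct.map fb φm with hF
    set G : H ⊗[ℂ] H →ₗ[ℂ] A :=
      LinearMap.mul' ℂ A ∘ₗ TensorProduct.map (counitA H A) φm with hG
    have hFt : ∀ u v : H, F (u ⊗ₜ[ℂ] v) = fb u * φm v := by intro u v; simp [hF]
    have hGt : ∀ u v : H, G (u ⊗ₜ[ℂ] v) = counitA H A u * φm v := by intro u v; simp [hG]
    have hkey : ∀ t ∈ gradedTwo ℬ p, ∀ s ∈ gradedTwo ℬ q,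
        F (t * s) = F t * F s + F t * G s + G t * F s := by
      intro t ht
      refine Submodule.iSup_induction (motive := fun t => ∀ s ∈ gradedTwo ℬ q,
          F (t * s) = F t * F s + F t * G s + G t * F s) _ ht ?_ ?_ ?_
      · intro ab t' ht'
        by_cases hab : ab.1 + ab.2 = p
        · rw [iSup_pos hab] at ht'
          obtain ⟨s₀, rfl⟩ := ht'
          induction s₀ using TensorProduct.induction_on with
          | zero => intro s hs; simp
          | tmul u v =>
            simp only [TensorProduct.map_tmul, Submodule.coe_subtype]
            intro s hs
            refine Submodule.iSup_induction (motive := fun s =>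
                F ((u.1 ⊗ₜ[ℂ] v.1) * s) = F (u.1 ⊗ₜ[ℂ] v.1) * F s
                  + F (u.1 ⊗ₜ[ℂ] v.1) * G s + G (u.1 ⊗ₜ[ℂ] v.1) * F s) _ hs ?_ ?_ ?_
            · intro cd s' hs'
              by_cases hcd : cd.1 + cd.2 = q
              · rw [iSup_pos hcd] at hs'
                obtain ⟨r₀, rfl⟩ := hs'
                induction r₀ using TensorProduct.induction_on with
                | zero => simp
                | tmul w z =>
                  simp only [TensorProduct.map_tmul, Submodule.coe_subtype]
                  rw [Algebra.TensorProduct.tmul_mul_tmul, hFt, hFt, hFt, hGt, hGt]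
                  rcases Nat.eq_zero_or_pos (ab.1 + cd.1) with hac0 | hac
                  · have hu0 : u.1 ∈ ℬ 0 := by
                      have : ab.1 = 0 := by omega
                      simpa [this] using u.2
                    have hw0 : w.1 ∈ ℬ 0 := by
                      have : cd.1 = 0 := by omega
                      simpa [this] using w.2
                    have huw : u.1 * w.1 ∈ ℬ 0 := by
                      simpa using SetLike.mul_mem_graded hu0 hw0
                    rw [hf0 _ huw, hf0 _ hu0, hf0 _ hw0]
                    simp
                  · have hmul : φm (v.1 * z.1) = φm v.1 * φm z.1 :=
                      IH (ab.2 + cd.2) (by omega) ab.2 cd.2 rfl v.1 v.2 z.1 z.2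
                    rw [hsplit u.1 w.1, hmul]
                    ring
                | add r₁ r₂ h₁ h₂ =>
                  simp only [map_add, mul_add, map_add] at h₁ h₂ ⊢
                  rw [h₁, h₂]
                  ring
              · rw [iSup_neg hcd] at hs'
                simp only [Submodule.mem_bot] at hs'
                simp [hs']
            · simp
            · intro s₁ s₂ h₁ h₂
              simp only [mul_add, map_add]
              rw [h₁, h₂]
              ring
          | add r₁ r₂ h₁ h₂ =>
            intro s hs
            simp only [map_add, add_mul] at h₁ h₂ ⊢
            rw [h₁ s hs, h₂ s hs]
            ring
        · rw [iSup_neg hab] at ht'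
          simp only [Submodule.mem_bot] at ht'
          intro s hs
          simp [ht']
      · intro s hs; simp
      · intro t₁ t₂ h₁ h₂ s hs
        simp only [add_mul, map_add]
        rw [h₁ s hs, h₂ s hs]
        ring
    have hGy : G (Coalgebra.comul (R := ℂ) y) = φm y := by
      have h := conv_counitA_left (H := H) (A := A) φm
      calc G (Coalgebra.comul (R := ℂ) y) = conv H A (counitA H A) φm y := rfl
        _ = φm y := by rw [h]
    have hGx : G (Coalgebra.comul (R := ℂ) x) = φm x := by
      have h := conv_counitA_left (H := H) (A := A) φm
      calc G (Coalgebra.comul (R := ℂ) x) = conv H A (counitA H A) φm x := rfl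
        _ = φm x := by rw [h]
    set a := conv H A fb φm x with ha
    set b := conv H A fb φm y with hb
    have h1 : conv H A fb φm (x * y) = a * b + a * φm y + φm x * b := by
      have hk := hkey _ (hgr p x hx) _ (hgr q y hy)
      rw [hGx, hGy] at hk
      calc conv H A fb φm (x * y)
          = F (Coalgebra.comul (R := ℂ) (x * y)) := rfl
        _ = F (Coalgebra.comul (R := ℂ) x * Coalgebra.comul (R := ℂ) y) := by
            rw [Bialgebra.comul_mul]
        _ = a * b + a * φm y + φm x * b := hk
    have hax : φm x = - Q a := hQf x hex
    have hby : φm y = - Q b := hQf y hey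
    rw [hQf (x * y) hexy, h1, hax, hby, neg_mul_neg, hQrb a b,
      show a * b + a * -Q b + -Q a * b = -(Q a * b + a * Q b - a * b) by ring,
      map_neg, neg_neg, map_sub, map_add]
  intro a b
  have main : ∀ a b : H, φm (a * b) = φm a * φm b := by
    refine DirectSum.Decomposition.inductionOn ℬ ?_ ?_ ?_
    · intro b; simp
    · intro i m
      refine DirectSum.Decomposition.inductionOn ℬ ?_ ?_ ?_
      · simp
      · intro j m'
        exact hhom (i + j) i j rfl m.1 m.2 m'.1 m'.2
      · intro b b' hbb hbb'
        rw [mul_add, map_add, hbb, hbb', map_add, mul_add]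
    · intro a a' haa haa' b
      rw [add_mul, map_add, haa, haa', map_add, add_mul]
  exact main a b

end Graded
lemma conv_assoc (f g h : H →ₗ[ℂ] A) :
    conv H A (conv H A f g) h = conv H A f (conv H A g h) := by
  have step1 : TensorProduct.map (conv H A f g) h
      = (LinearMap.mul' ℂ A).rTensor A ∘ₗ TensorProduct.map (TensorProduct.map f g) h ∘ₗ
          (Coalgebra.comul (R := ℂ) (A := H)).rTensor H := by
    apply TensorProduct.ext'
    intro x y
    simp [conv_apply, LinearMap.rTensor_tmul]
  have step2 : TensorProduct.map f (conv H A g h)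
      = (LinearMap.mul' ℂ A).lTensor A ∘ₗ TensorProduct.map f (TensorProduct.map g h) ∘ₗ
          (Coalgebra.comul (R := ℂ) (A := H)).lTensor H := by
    apply TensorProduct.ext'
    intro x y
    simp [conv_apply, LinearMap.lTensor_tmul]
  have step3 : (LinearMap.mul' ℂ A) ∘ₗ (LinearMap.mul' ℂ A).rTensor A ∘ₗ
        TensorProduct.map (TensorProduct.map f g) h ∘ₗ
        (TensorProduct.assoc ℂ H H H).symm.toLinearMap
      = (LinearMap.mul' ℂ A) ∘ₗ (LinearMap.mul' ℂ A).lTensor A ∘ₗ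
        TensorProduct.map f (TensorProduct.map g h) := by
    apply TensorProduct.ext'
    intro x t
    induction t using TensorProduct.induction_on with
    | zero => simp only [TensorProduct.tmul_zero, map_zero]
    | tmul y z => simp [mul_assoc]
    | add t₁ t₂ h₁ h₂ =>
      simp only [TensorProduct.tmul_add, map_add] at h₁ h₂ ⊢
      rw [h₁, h₂]
  apply LinearMap.ext
  intro x
  have hco : (Coalgebra.comul (R := ℂ) (A := H)).rTensor H
        (Coalgebra.comul (R := ℂ) x)
      = (TensorProduct.assoc ℂ H H H).symm
          ((Coalgebra.comul (R := ℂ) (A := H)).lTensor H (Coalgebra.comul (R := ℂ) x)) := by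
    rw [Coalgebra.coassoc_symm_apply]
  rw [conv_apply, conv_apply, step1, step2]
  simp only [LinearMap.comp_apply]
  rw [hco]
  have := LinearMap.congr_fun step3
    ((Coalgebra.comul (R := ℂ) (A := H)).lTensor H (Coalgebra.comul (R := ℂ) x))
  simp only [LinearMap.comp_apply, LinearEquiv.coe_coe] at this
  exact this
lemma conv_mul_of_mul (f g : H →ₗ[ℂ] A)
    (hf : ∀ a b : H, f (a * b) = f a * f b) (hg : ∀ a b : H, g (a * b) = g a * g b) :
    ∀ a b : H, conv H A f g (a * b) = conv H A f g a * conv H A f g b := by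
  have key : ∀ t s : H ⊗[ℂ] H,
      LinearMap.mul' ℂ A (TensorProduct.map f g (t * s))
        = LinearMap.mul' ℂ A (TensorProduct.map f g t)
            * LinearMap.mul' ℂ A (TensorProduct.map f g s) := by
    intro t s
    induction t using TensorProduct.induction_on with
    | zero => simp
    | tmul u v =>
      induction s using TensorProduct.induction_on with
      | zero => simp
      | tmul w z =>
        rw [Algebra.TensorProduct.tmul_mul_tmul]
        simp only [TensorProduct.map_tmul, LinearMap.mul'_apply]
        rw [hf, hg]; ring
      | add s₁ s₂ h₁ h₂ => simp only [mul_add, map_add, h₁, h₂]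
    | add t₁ t₂ h₁ h₂ => simp only [add_mul, map_add, h₁, h₂]
  intro a b
  rw [conv_apply, conv_apply, conv_apply, Bialgebra.comul_mul, key]

lemma conv_one_of_one (f g : H →ₗ[ℂ] A) (hf : f 1 = 1) (hg : g 1 = 1) :
    conv H A f g 1 = 1 := by
  rw [conv_apply, Bialgebra.comul_one, Algebra.TensorProduct.one_def]
  simp [hf, hg]

lemma conv_antipode (φm : H →ₗ[ℂ] A) (hone : φm 1 = 1)
    (hmul : ∀ a b : H, φm (a * b) = φm a * φm b) :
    conv H A φm (φm ∘ₗ HopfAlgebra.antipode (R := ℂ)) = counitA H A := by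
  have halg : ∀ c : ℂ, φm (algebraMap ℂ H c) = algebraMap ℂ A c := by
    intro c
    rw [Algebra.algebraMap_eq_smul_one, map_smul, hone, ← Algebra.algebraMap_eq_smul_one]
  have h1 : LinearMap.mul' ℂ A ∘ₗ TensorProduct.map φm φm
      = φm ∘ₗ LinearMap.mul' ℂ H := by
    apply TensorProduct.ext'; intro x y; simp [hmul]
  have h2 : TensorProduct.map φm (φm ∘ₗ HopfAlgebra.antipode (R := ℂ))
      = TensorProduct.map φm φm ∘ₗ
          (HopfAlgebra.antipode (R := ℂ) (A := H)).lTensor H := by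
    apply TensorProduct.ext'; intro x y; simp [LinearMap.lTensor_tmul]
  apply LinearMap.ext; intro x
  rw [conv_apply, h2]
  have h3 := congr($(HopfAlgebra.mul_antipode_lTensor_comul (R := ℂ) (A := H)) x)
  simp only [LinearMap.comp_apply] at h3
  have h4 := LinearMap.congr_fun h1
    ((HopfAlgebra.antipode (R := ℂ) (A := H)).lTensor H (Coalgebra.comul (R := ℂ) x))
  simp only [LinearMap.comp_apply] at h4 ⊢
  rw [h4, h3]
  show φm (algebraMap ℂ H (Coalgebra.counit (R := ℂ) x)) = counitA H A x
  rw [halg, counitA_apply]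

/-- Algebraic Birkhoff factorisation, Connes–Kreimer: for a
connected graded Hopf algebra `H` over `ℂ`, a commutative unital algebra `A`
with a linear Rota–Baxter projection `Q` of weight `−1`, and any character
`φ : H →ₐ[ℂ] A`, the Bogoliubov recursions
`φ₋ = 1* − Q((φ − 1*) ⋆ φ₋)` and `φ₊ = 1* + (id−Q)((φ − 1*) ⋆ φ₋)` have a
unique solution; the resulting maps are algebra morphisms taking values (on
the augmentation ideal) in `Q(A)` resp. `(id−Q)(A)`, and they satisfy the
factorisation `φ = φ₊ ⋆ φ₋⁻¹ = φ₊ ⋆ (φ₋ ∘ 𝒜)`. -/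
theorem algebraic_birkhoff_factorisation
    (ℬ : ℕ → Submodule ℂ H) [GradedAlgebra ℬ]
    (hconn : ℬ 0 = 1)
    (hgr : ∀ n, ∀ x ∈ ℬ n, Coalgebra.comul (R := ℂ) x ∈
      ⨆ (p : ℕ × ℕ) (_ : p.1 + p.2 = n),
        LinearMap.range (TensorProduct.map (ℬ p.1).subtype (ℬ p.2).subtype))
    (Q : A →ₗ[ℂ] A) (hQproj : Q ∘ₗ Q = Q)
    (hQrb : ∀ a b : A, Q a * Q b = Q (Q a * b + a * Q b) - Q (a * b))
    (φ : H →ₐ[ℂ] A) :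
    (∃! φm : H →ₗ[ℂ] A,
        φm = counitA H A - Q ∘ₗ conv H A (φ.toLinearMap - counitA H A) φm)
      ∧ ∀ φm : H →ₗ[ℂ] A,
          φm = counitA H A - Q ∘ₗ conv H A (φ.toLinearMap - counitA H A) φm →
          ∀ φp : H →ₗ[ℂ] A,
            φp = counitA H A
                + (LinearMap.id - Q) ∘ₗ conv H A (φ.toLinearMap - counitA H A) φm →
            (φm 1 = 1 ∧ ∀ a b : H, φm (a * b) = φm a * φm b)
              ∧ (φp 1 = 1 ∧ ∀ a b : H, φp (a * b) = φp a * φp b)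
              ∧ (∀ τ : H, Coalgebra.counit (R := ℂ) τ = 0 →
                  φm τ ∈ LinearMap.range Q
                    ∧ φp τ ∈ LinearMap.range (LinearMap.id - Q))
              ∧ φ.toLinearMap
                  = conv H A φp (φm ∘ₗ HopfAlgebra.antipode (R := ℂ)) := by
  have hgr' : ∀ n, ∀ x ∈ ℬ n, Coalgebra.comul (R := ℂ) x ∈ gradedTwo ℬ n := hgr
  set fb := φ.toLinearMap - counitA H A with hfb
  constructor
  · exact ⟨birkPhim ℬ Q fb, birkPhim_fixed ℬ φ Q hconn hgr',
      fun ψ hψ => birk_unique ℬ φ Q hconn hgr' ψ (birkPhim ℬ Q fb) hψ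
        (birkPhim_fixed ℬ φ Q hconn hgr')⟩
  · intro φm heq φp heqp
    have hmone : φm 1 = 1 := birk_phim_one ℬ φ Q hconn hgr' φm heq
    have hmmul : ∀ a b : H, φm (a * b) = φm a * φm b :=
      birk_phim_mul ℬ φ Q hconn hgr' hQrb φm heq
    have hQr : Q ∘ₗ conv H A fb φm = counitA H A - φm := by
      conv_rhs => rw [heq]
      rw [sub_sub_cancel]
    have hρ : conv H A fb φm = conv H A φ.toLinearMap φm - φm := by
      rw [hfb, conv_sub_left, conv_counitA_left]
    have hφp : φp = conv H A φ.toLinearMap φm := by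
      rw [heqp, LinearMap.sub_comp, LinearMap.id_comp, hQr, hρ]
      abel
    refine ⟨⟨hmone, hmmul⟩, ⟨?_, ?_⟩, ?_, ?_⟩
    · rw [hφp]
      exact conv_one_of_one _ _ (by simpa using map_one φ) hmone
    · rw [hφp]
      exact conv_mul_of_mul _ _ (by intro a b; simp) hmmul
    · intro τ hτ
      constructor
      · have h5 : φm τ = - Q (conv H A fb φm τ) := by
          conv_lhs => rw [heq]
          show counitA H A τ - Q (conv H A fb φm τ) = _
          rw [counitA_apply, hτ, map_zero, zero_sub]
        exact ⟨-(conv H A fb φm τ), by rw [map_neg]; exact h5.symm⟩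
      · refine ⟨conv H A fb φm τ, ?_⟩
        rw [heqp]
        simp only [LinearMap.add_apply, LinearMap.comp_apply, counitA_apply, hτ, map_zero,
          zero_add]
    · rw [hφp, conv_assoc, conv_antipode φm hmone hmmul, conv_counitA_right]
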